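/- Assume (p₀), (V_α), (G_β). There exist constants 0 < c ≤ C < ∞ such that for all x ∈ G and R ≥ 1, c·R^β ≤ E_x[T_{B(x,R)}] ≤ Σ_{y∈B(x,R)} λ_y g(x,y) ≤ C·R^β, where T_{B(x,R)} is the exit time of the ball B(x,R) and E_x[T_{B(x,R)}] = Σ_{y∈B(x,R)} λ_y g_{B(x,R)}(x,y). -/

import Mathlib

open scoped ENNReal

open Classical in
noncomputable def nstep {V : Type*} (p : V → V → ℝ) : ℕ → V → V → ℝ
  | 0, x, y => if x = y then 1 else 0
  | n + 1, x, y => ∑' z, nstep p n x z * p z y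

noncomputable def green {V : Type*} (p : V → V → ℝ) (lam : V → ℝ) (x y : V) : ℝ :=
  (1 / lam y) * ∑' n, nstep p n x y

open Classical in
noncomputable def killedKernel {V : Type*} (p : V → V → ℝ) (U : Set V) (x y : V) : ℝ :=
  if x ∈ U ∧ y ∈ U then p x y else 0

noncomputable def killedGreen {V : Type*} (p : V → V → ℝ) (lam : V → ℝ) (U : Set V) (x y : V) : ℝ :=
  (1 / lam y) * ∑' n, nstep (killedKernel p U) n x y

open Classical in
noncomputable def hitProb {V : Type*} (p : V → V → ℝ) (A : Set V) (x : V) : ℝ :=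
  ∑' n : ℕ, ∑' y : V, if y ∈ A then nstep (fun a b => if a ∈ A then 0 else p a b) n x y else 0

open Classical in
noncomputable def eqMeasure {V : Type*} (p : V → V → ℝ) (lam : V → ℝ) (A : Set V) (x : V) : ℝ :=
  if x ∈ A then lam x * (1 - ∑' y, p x y * hitProb p A y) else 0

noncomputable def capaE {V : Type*} (p : V → V → ℝ) (lam : V → ℝ) (A : Set V) : ℝ≥0∞ :=
  ∑' x : V, Set.indicator A (fun v => ENNReal.ofReal (eqMeasure p lam A v)) x

set_option linter.unusedSectionVars false
set_option maxHeartbeats 1000000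

section Aux

variable {V : Type*} [DecidableEq V] (G : SimpleGraph V) [∀ v : V, Fintype (G.neighborSet v)]

noncomputable def reach : ℕ → V → Finset V
  | 0, x => {x}
  | n + 1, x => (reach n x).biUnion (fun z => G.neighborFinset z)

variable {G}

lemma reach_zero (x : V) : reach G 0 x = {x} := rfl

lemma reach_one (x : V) : reach G 1 x = G.neighborFinset x := by
  show ({x} : Finset V).biUnion _ = _
  simp

lemma mem_reach_succ {x z y : V} {n : ℕ} (hz : z ∈ reach G n x) (hy : G.Adj z y) :
    y ∈ reach G (n + 1) x := by
  show y ∈ (reach G n x).biUnion _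
  exact Finset.mem_biUnion.2 ⟨z, hz, (SimpleGraph.mem_neighborFinset _ _ _).2 hy⟩

lemma reach_mono {x w : V} (hw : G.Adj x w) : ∀ n, reach G n w ⊆ reach G (n + 1) x := by
  intro n
  induction n with
  | zero =>
      intro y hy
      rw [reach_zero, Finset.mem_singleton] at hy
      subst hy
      exact mem_reach_succ (by rw [reach_zero]; exact Finset.mem_singleton_self x) hw
  | succ n ih =>
      show (reach G n w).biUnion _ ⊆ (reach G (n+1) x).biUnion _
      exact Finset.biUnion_subset_biUnion_of_subset_left _ ih

lemma nstep_supp {q : V → V → ℝ} (hq : ∀ a b, ¬ G.Adj a b → q a b = 0) :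
    ∀ (n : ℕ) (x y : V), y ∉ reach G n x → nstep q n x y = 0 := by
  intro n
  induction n with
  | zero =>
      intro x y hy
      rw [reach_zero, Finset.mem_singleton] at hy
      simp only [nstep]
      rw [if_neg (fun h => hy h.symm)]
  | succ n ih =>
      intro x y hy
      show ∑' z, nstep q n x z * q z y = 0
      have h : ∀ z, nstep q n x z * q z y = 0 := by
        intro z
        by_cases hz : z ∈ reach G n x
        · rw [hq z y (fun h => hy (mem_reach_succ hz h)), mul_zero]
        · rw [ih x z hz, zero_mul]
      rw [tsum_congr h, tsum_zero]

lemma nstep_eq_sum {q : V → V → ℝ} (hq : ∀ a b, ¬ G.Adj a b → q a b = 0)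
    (n : ℕ) (x y : V) {s : Finset V} (hs : reach G n x ⊆ s) :
    nstep q (n + 1) x y = ∑ z ∈ s, nstep q n x z * q z y := by
  show ∑' z, nstep q n x z * q z y = _
  exact tsum_eq_sum (fun z hz => by rw [nstep_supp hq n x z (fun h => hz (hs h)), zero_mul])

lemma nstep_nonneg {q : V → V → ℝ} (hq0 : ∀ a b, 0 ≤ q a b) :
    ∀ (n : ℕ) (x y : V), 0 ≤ nstep q n x y := by
  intro n
  induction n with
  | zero => intro x y; simp only [nstep]; split <;> norm_num
  | succ n ih =>
      intro x y
      exact tsum_nonneg (fun z => mul_nonneg (ih x z) (hq0 z y))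

lemma nstep_mono {q q' : V → V → ℝ} (hq0 : ∀ a b, 0 ≤ q a b)
    (hle : ∀ a b, q a b ≤ q' a b) (hq' : ∀ a b, ¬ G.Adj a b → q' a b = 0) :
    ∀ (n : ℕ) (x y : V), nstep q n x y ≤ nstep q' n x y := by
  have hq : ∀ a b, ¬ G.Adj a b → q a b = 0 := by
    intro a b h
    have h1 := hle a b
    rw [hq' a b h] at h1
    exact le_antisymm h1 (hq0 a b)
  intro n
  induction n with
  | zero => intro x y; simp [nstep]
  | succ n ih =>
      intro x y
      rw [nstep_eq_sum hq n x y (le_refl _), nstep_eq_sum hq' n x y (le_refl _)]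
      apply Finset.sum_le_sum
      intro z _
      exact mul_le_mul (ih x z) (hle z y) (hq0 z y)
        (nstep_nonneg (fun a b => le_trans (hq0 a b) (hle a b)) n x z)

lemma nstep_firststep {q : V → V → ℝ} (hq : ∀ a b, ¬ G.Adj a b → q a b = 0) :
    ∀ (n : ℕ) (x y : V),
      nstep q (n + 1) x y = ∑ z ∈ G.neighborFinset x, q x z * nstep q n z y := by
  intro n
  induction n with
  | zero =>
      intro x y
      rw [nstep_eq_sum hq 0 x y (le_refl _), reach_zero]
      rw [Finset.sum_singleton]
      have h0 : nstep q 0 x x = 1 := by simp [nstep]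
      rw [h0, one_mul]
      rw [Finset.sum_congr rfl (fun z _ => by
        show q x z * nstep q 0 z y = if z = y then q x z else 0
        by_cases h : z = y <;> simp [nstep, h])]
      rw [Finset.sum_ite_eq' (G.neighborFinset x) y (fun z => q x z)]
      split
      · rfl
      · next h => exact hq x y (fun hadj => h ((SimpleGraph.mem_neighborFinset _ _ _).2 hadj))
  | succ n ih =>
      intro x y
      rw [nstep_eq_sum hq (n+1) x y (le_refl _)]
      rw [Finset.sum_congr rfl (fun z (_ : z ∈ reach G (n+1) x) => by
        rw [ih x z, Finset.sum_mul])]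
      rw [Finset.sum_comm]
      apply Finset.sum_congr rfl
      intro w hw
      have hadj : G.Adj x w := (SimpleGraph.mem_neighborFinset _ _ _).1 hw
      rw [nstep_eq_sum hq n w y (reach_mono hadj n), Finset.mul_sum]
      apply Finset.sum_congr rfl
      intro z _
      ring


-- STAGE 2
open Classical in
noncomputable def rker (p : V → V → ℝ) (A : Set V) : V → V → ℝ :=
  fun a b => if a ∈ A then 0 else p a b

variable {p : V → V → ℝ} {A : Set V} [DecidablePred (· ∈ A)]

lemma rker_adj (hpadj : ∀ a b, ¬ G.Adj a b → p a b = 0) :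
    ∀ a b, ¬ G.Adj a b → rker p A a b = 0 := by
  intro a b h
  unfold rker
  split
  · rfl
  · exact hpadj a b h

lemma rker_nonneg (hp0 : ∀ a b, 0 ≤ p a b) : ∀ a b, 0 ≤ rker p A a b := by
  intro a b; unfold rker; split
  · exact le_refl 0
  · exact hp0 a b

lemma rker_le (hp0 : ∀ a b, 0 ≤ p a b) : ∀ a b, rker p A a b ≤ p a b := by
  intro a b; unfold rker; split
  · exact hp0 a b
  · exact le_refl _

lemma rker_of_not_mem {x : V} (hx : x ∉ A) (w : V) : rker p A x w = p x w := if_neg hx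

lemma nstep_one {q : V → V → ℝ} (hq : ∀ a b, ¬ G.Adj a b → q a b = 0) (x z : V) :
    nstep q 1 x z = q x z := by
  rw [nstep_eq_sum hq 0 x z (le_refl _), reach_zero, Finset.sum_singleton]
  have h0 : nstep q 0 x x = 1 := by simp [nstep]
  rw [h0, one_mul]

lemma nstep_rker_from_A (hpadj : ∀ a b, ¬ G.Adj a b → p a b = 0) {w : V} (hw : w ∈ A)
    (m : ℕ) (z : V) : nstep (rker p A) (m + 1) w z = 0 := by
  rw [nstep_firststep (rker_adj hpadj) m w z]
  apply Finset.sum_eq_zero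
  intro v _
  rw [show rker p A w v = 0 from if_pos hw, zero_mul]

lemma nstep_rker_zero_to {w y : V} (hw : w ∈ A) (hy : y ∉ A) (n : ℕ)
    (hpadj : ∀ a b, ¬ G.Adj a b → p a b = 0) : nstep (rker p A) n w y = 0 := by
  cases n with
  | zero =>
      simp only [nstep]
      rw [if_neg (show ¬ w = y from fun h => hy (h ▸ hw))]
  | succ m => exact nstep_rker_from_A hpadj hw m y

lemma sum_p_le_one (hp0 : ∀ a b, 0 ≤ p a b) (hpadj : ∀ a b, ¬ G.Adj a b → p a b = 0)
    (hpsum : ∀ a, ∑ b ∈ G.neighborFinset a, p a b ≤ 1) (v : V) (s : Finset V) :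
    ∑ w ∈ s, p v w ≤ 1 := by
  have h1 : ∑ w ∈ s, p v w = ∑ w ∈ s ∩ G.neighborFinset v, p v w := by
    refine (Finset.sum_subset Finset.inter_subset_left ?_).symm
    intro w hws hwn
    exact hpadj v w (fun h => hwn (Finset.mem_inter.2 ⟨hws, (SimpleGraph.mem_neighborFinset _ _ _).2 h⟩))
  rw [h1]
  refine le_trans (Finset.sum_le_sum_of_subset_of_nonneg Finset.inter_subset_right ?_) (hpsum v)
  intro w _ _
  exact hp0 v w

lemma sum_rker_le_one (hp0 : ∀ a b, 0 ≤ p a b) (hpadj : ∀ a b, ¬ G.Adj a b → p a b = 0)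
    (hpsum : ∀ a, ∑ b ∈ G.neighborFinset a, p a b ≤ 1) (v : V) (s : Finset V) :
    ∑ w ∈ s, rker p A v w ≤ 1 :=
  le_trans (Finset.sum_le_sum (fun w _ => rker_le hp0 v w)) (sum_p_le_one hp0 hpadj hpsum v s)

lemma exit_mass (hp0 : ∀ a b, 0 ≤ p a b) (hpadj : ∀ a b, ¬ G.Adj a b → p a b = 0)
    (hpsum : ∀ a, ∑ b ∈ G.neighborFinset a, p a b ≤ 1) {x : V} (hx : x ∉ A) (K : ℕ) :
    (∑ w ∈ (reach G K x).filter (fun w => w ∉ A), nstep (rker p A) K x w)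
      + ∑ k ∈ Finset.range K,
          ∑ z ∈ (reach G (k+1) x).filter (fun z => z ∈ A), nstep (rker p A) (k+1) x z ≤ 1 := by
  induction K with
  | zero =>
      rw [Finset.range_zero, Finset.sum_empty, add_zero, reach_zero, Finset.filter_singleton,
        if_pos hx, Finset.sum_singleton]
      simp [nstep]
  | succ K ih =>
      rw [Finset.sum_range_succ]
      have hparts :
          (∑ w ∈ (reach G (K+1) x).filter (fun w => w ∉ A), nstep (rker p A) (K+1) x w)
            + ∑ z ∈ (reach G (K+1) x).filter (fun z => z ∈ A), nstep (rker p A) (K+1) x z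
          ≤ ∑ w ∈ (reach G K x).filter (fun w => w ∉ A), nstep (rker p A) K x w := by
        have hfull : (∑ w ∈ (reach G (K+1) x).filter (fun w => w ∉ A), nstep (rker p A) (K+1) x w)
            + ∑ z ∈ (reach G (K+1) x).filter (fun z => z ∈ A), nstep (rker p A) (K+1) x z
            = ∑ w ∈ reach G (K+1) x, nstep (rker p A) (K+1) x w := by
          rw [add_comm]
          exact Finset.sum_filter_add_sum_filter_not _ _ _
        rw [hfull]
        have hrec : ∀ w ∈ reach G (K+1) x, nstep (rker p A) (K+1) x w
            = ∑ v ∈ reach G K x, nstep (rker p A) K x v * rker p A v w :=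
          fun w _ => nstep_eq_sum (rker_adj hpadj) K x w (le_refl _)
        rw [Finset.sum_congr rfl hrec, Finset.sum_comm]
        have hsplit : ∑ v ∈ reach G K x, ∑ w ∈ reach G (K+1) x, nstep (rker p A) K x v * rker p A v w
            = (∑ v ∈ (reach G K x).filter (fun v => v ∈ A), ∑ w ∈ reach G (K+1) x, nstep (rker p A) K x v * rker p A v w)
              + ∑ v ∈ (reach G K x).filter (fun v => ¬ v ∈ A), ∑ w ∈ reach G (K+1) x, nstep (rker p A) K x v * rker p A v w :=
          (Finset.sum_filter_add_sum_filter_not _ _ _).symm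
        rw [hsplit]
        have hAzero : ∑ v ∈ (reach G K x).filter (fun v => v ∈ A),
            ∑ w ∈ reach G (K+1) x, nstep (rker p A) K x v * rker p A v w = 0 := by
          apply Finset.sum_eq_zero
          intro v hv
          apply Finset.sum_eq_zero
          intro w _
          rw [show rker p A v w = 0 from if_pos (Finset.mem_filter.1 hv).2, mul_zero]
        rw [hAzero, zero_add]
        apply Finset.sum_le_sum
        intro v hv
        rw [← Finset.mul_sum]
        have hone : ∑ w ∈ reach G (K+1) x, rker p A v w ≤ 1 :=
          sum_rker_le_one hp0 hpadj hpsum v _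
        calc nstep (rker p A) K x v * ∑ w ∈ reach G (K+1) x, rker p A v w
            ≤ nstep (rker p A) K x v * 1 := by
              apply mul_le_mul_of_nonneg_left hone (nstep_nonneg (rker_nonneg hp0) K x v)
          _ = nstep (rker p A) K x v := mul_one _
      calc (∑ w ∈ (reach G (K+1) x).filter (fun w => w ∉ A), nstep (rker p A) (K+1) x w)
            + ((∑ k ∈ Finset.range K, ∑ z ∈ (reach G (k+1) x).filter (fun z => z ∈ A),
                nstep (rker p A) (k+1) x z)
              + ∑ z ∈ (reach G (K+1) x).filter (fun z => z ∈ A), nstep (rker p A) (K+1) x z)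
          = ((∑ w ∈ (reach G (K+1) x).filter (fun w => w ∉ A), nstep (rker p A) (K+1) x w)
              + ∑ z ∈ (reach G (K+1) x).filter (fun z => z ∈ A), nstep (rker p A) (K+1) x z)
            + ∑ k ∈ Finset.range K, ∑ z ∈ (reach G (k+1) x).filter (fun z => z ∈ A),
                nstep (rker p A) (k+1) x z := by ring
        _ ≤ (∑ w ∈ (reach G K x).filter (fun w => w ∉ A), nstep (rker p A) K x w)
            + ∑ k ∈ Finset.range K, ∑ z ∈ (reach G (k+1) x).filter (fun z => z ∈ A),
                nstep (rker p A) (k+1) x z := by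
              exact add_le_add hparts (le_refl _)
        _ ≤ 1 := ih

lemma nstep_decomp (hpadj : ∀ a b, ¬ G.Adj a b → p a b = 0) :
    ∀ (n : ℕ) {x : V}, x ∉ A → ∀ (y : V),
    nstep p n x y = (if y ∈ A then 0 else nstep (rker p A) n x y)
      + ∑ k ∈ Finset.range n, ∑ z ∈ (reach G (k+1) x).filter (fun z => z ∈ A),
          nstep (rker p A) (k+1) x z * nstep p (n - (k+1)) z y := by
  have hradj : ∀ a b, ¬ G.Adj a b → rker p A a b = 0 := rker_adj hpadj
  intro n
  induction n with
  | zero =>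
      intro x hx y
      rw [Finset.range_zero, Finset.sum_empty, add_zero]
      by_cases hy : y ∈ A
      · rw [if_pos hy]
        simp only [nstep]
        rw [if_neg (show ¬ x = y from fun h => hx (h ▸ hy))]
      · rw [if_neg hy]
        rfl
  | succ n ih =>
      intro x hx y
      have hLHS : nstep p (n+1) x y
          = (∑ w ∈ (G.neighborFinset x).filter (fun w => w ∈ A), p x w * nstep p n w y)
            + ∑ w ∈ (G.neighborFinset x).filter (fun w => ¬ w ∈ A), p x w * nstep p n w y := by
        rw [nstep_firststep hpadj n x y]
        exact (Finset.sum_filter_add_sum_filter_not _ _ _).symm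
      have hIH : ∑ w ∈ (G.neighborFinset x).filter (fun w => ¬ w ∈ A), p x w * nstep p n w y
          = (∑ w ∈ (G.neighborFinset x).filter (fun w => ¬ w ∈ A),
              p x w * (if y ∈ A then 0 else nstep (rker p A) n w y))
            + ∑ w ∈ (G.neighborFinset x).filter (fun w => ¬ w ∈ A),
                p x w * ∑ k ∈ Finset.range n, ∑ z ∈ (reach G (k+1) w).filter (fun z => z ∈ A),
                  nstep (rker p A) (k+1) w z * nstep p (n - (k+1)) z y := by
        rw [← Finset.sum_add_distrib]
        apply Finset.sum_congr rfl
        intro w hw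
        rw [← mul_add, ← ih (Finset.mem_filter.1 hw).2 y]
      have hT1 : (if y ∈ A then (0:ℝ) else nstep (rker p A) (n+1) x y)
          = ∑ w ∈ (G.neighborFinset x).filter (fun w => ¬ w ∈ A),
              p x w * (if y ∈ A then 0 else nstep (rker p A) n w y) := by
        by_cases hy : y ∈ A
        · simp only [if_pos hy, mul_zero, Finset.sum_const_zero]
        · simp only [if_neg hy]
          rw [nstep_firststep hradj n x y]
          rw [← Finset.sum_filter_add_sum_filter_not (G.neighborFinset x) (fun w => w ∈ A)
            (fun w => rker p A x w * nstep (rker p A) n w y)]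
          have h1 : ∑ w ∈ (G.neighborFinset x).filter (fun w => w ∈ A),
              rker p A x w * nstep (rker p A) n w y = 0 := by
            apply Finset.sum_eq_zero; intro w hw
            rw [nstep_rker_zero_to (Finset.mem_filter.1 hw).2 hy n hpadj, mul_zero]
          rw [h1, zero_add]
          exact Finset.sum_congr rfl (fun w _ => by rw [rker_of_not_mem hx])
      have hEk : ∀ k ∈ Finset.range n,
          (∑ z ∈ (reach G (k+1+1) x).filter (fun z => z ∈ A),
            nstep (rker p A) (k+1+1) x z * nstep p (n + 1 - (k+1+1)) z y)
          = ∑ w ∈ (G.neighborFinset x).filter (fun w => ¬ w ∈ A),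
              p x w * ∑ z ∈ (reach G (k+1) w).filter (fun z => z ∈ A),
                nstep (rker p A) (k+1) w z * nstep p (n - (k+1)) z y := by
        intro k _
        have hnt : n + 1 - (k+1+1) = n - (k+1) := by omega
        rw [hnt]
        have hstep : ∀ z ∈ (reach G (k+1+1) x).filter (fun z => z ∈ A),
            nstep (rker p A) (k+1+1) x z * nstep p (n - (k+1)) z y
            = ∑ w ∈ (G.neighborFinset x).filter (fun w => ¬ w ∈ A),
                p x w * (nstep (rker p A) (k+1) w z * nstep p (n - (k+1)) z y) := by
          intro z _
          rw [nstep_firststep hradj (k+1) x z]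
          rw [← Finset.sum_filter_add_sum_filter_not (G.neighborFinset x) (fun w => w ∈ A)
            (fun w => rker p A x w * nstep (rker p A) (k+1) w z)]
          have hz1 : ∑ w ∈ (G.neighborFinset x).filter (fun w => w ∈ A),
              rker p A x w * nstep (rker p A) (k+1) w z = 0 := by
            apply Finset.sum_eq_zero; intro w hw
            rw [nstep_rker_from_A hpadj (Finset.mem_filter.1 hw).2 k z, mul_zero]
          rw [hz1, zero_add, Finset.sum_mul]
          apply Finset.sum_congr rfl
          intro w _
          rw [rker_of_not_mem hx]
          ring
        rw [Finset.sum_congr rfl hstep, Finset.sum_comm]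
        apply Finset.sum_congr rfl
        intro w hw
        rw [← Finset.mul_sum]
        congr 1
        have hadj : G.Adj x w := (SimpleGraph.mem_neighborFinset _ _ _).1 (Finset.mem_filter.1 hw).1
        refine (Finset.sum_subset (Finset.filter_subset_filter _ (reach_mono hadj (k+1))) ?_).symm
        intro z hzbig hzsmall
        have hzA : z ∈ A := (Finset.mem_filter.1 hzbig).2
        have hzr : z ∉ reach G (k+1) w := fun hr => hzsmall (Finset.mem_filter.2 ⟨hr, hzA⟩)
        rw [nstep_supp hradj (k+1) w z hzr, zero_mul]
      rw [hLHS, hIH, hT1, Finset.sum_range_succ']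
      have hf0 : (∑ z ∈ (reach G (0+1) x).filter (fun z => z ∈ A),
          nstep (rker p A) (0+1) x z * nstep p (n+1-(0+1)) z y)
          = ∑ w ∈ (G.neighborFinset x).filter (fun w => w ∈ A), p x w * nstep p n w y := by
        have h1 : reach G (0+1) x = G.neighborFinset x := reach_one x
        rw [h1]
        apply Finset.sum_congr rfl
        intro z _
        rw [nstep_one hradj, rker_of_not_mem hx]
        norm_num
      rw [hf0, Finset.sum_congr rfl hEk]
      have hswap : ∑ k ∈ Finset.range n, ∑ w ∈ (G.neighborFinset x).filter (fun w => ¬ w ∈ A),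
            p x w * ∑ z ∈ (reach G (k+1) w).filter (fun z => z ∈ A),
              nstep (rker p A) (k+1) w z * nstep p (n - (k+1)) z y
          = ∑ w ∈ (G.neighborFinset x).filter (fun w => ¬ w ∈ A),
              p x w * ∑ k ∈ Finset.range n, ∑ z ∈ (reach G (k+1) w).filter (fun z => z ∈ A),
                nstep (rker p A) (k+1) w z * nstep p (n - (k+1)) z y := by
        rw [Finset.sum_comm]
        exact Finset.sum_congr rfl (fun w _ => by rw [Finset.mul_sum])
      rw [hswap]
      ring

lemma sum_range_shift (b : ℕ → ℝ) (k : ℕ) : ∀ N : ℕ,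
    ∑ n ∈ Finset.range N, (if k < n then b (n - (k+1)) else 0)
      = ∑ m ∈ Finset.range (N - (k+1)), b m := by
  intro N
  induction N with
  | zero => simp
  | succ N ih =>
      rw [Finset.sum_range_succ, ih]
      by_cases h : k < N
      · rw [if_pos h, show N + 1 - (k+1) = (N - (k+1)) + 1 by omega, Finset.sum_range_succ]
      · rw [if_neg h, add_zero, show N + 1 - (k+1) = N - (k+1) by omega]

lemma keyD (hp0 : ∀ a b, 0 ≤ p a b) (hpadj : ∀ a b, ¬ G.Adj a b → p a b = 0)
    (hpsum : ∀ a, ∑ b ∈ G.neighborFinset a, p a b ≤ 1)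
    {x : V} (hx : x ∉ A) (y : V)
    (hsum : ∀ z : V, Summable (fun m => nstep p m z y))
    {M : ℝ} (hM0 : 0 ≤ M) (hM : ∀ z ∈ A, (∑' m, nstep p m z y) ≤ M) (N : ℕ) :
    ∑ n ∈ Finset.range N, (∑ k ∈ Finset.range n,
        ∑ z ∈ (reach G (k+1) x).filter (fun z => z ∈ A),
          nstep (rker p A) (k+1) x z * nstep p (n - (k+1)) z y) ≤ M := by
  have hradj : ∀ a b, ¬ G.Adj a b → rker p A a b = 0 := rker_adj hpadj
  have hrange : ∀ n ∈ Finset.range N,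
      (∑ k ∈ Finset.range n, ∑ z ∈ (reach G (k+1) x).filter (fun z => z ∈ A),
          nstep (rker p A) (k+1) x z * nstep p (n - (k+1)) z y)
      = ∑ k ∈ Finset.range N, (if k < n then
          ∑ z ∈ (reach G (k+1) x).filter (fun z => z ∈ A),
            nstep (rker p A) (k+1) x z * nstep p (n - (k+1)) z y else 0) := by
    intro n hn
    have hnN : n ≤ N := le_of_lt (Finset.mem_range.1 hn)
    have hfilter : Finset.range n = (Finset.range N).filter (fun k => k < n) := by
      ext k
      simp only [Finset.mem_range, Finset.mem_filter]
      omega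
    rw [hfilter, Finset.sum_filter]
  rw [Finset.sum_congr rfl hrange, Finset.sum_comm]
  have hinner : ∀ k ∈ Finset.range N,
      (∑ n ∈ Finset.range N, if k < n then
          ∑ z ∈ (reach G (k+1) x).filter (fun z => z ∈ A),
            nstep (rker p A) (k+1) x z * nstep p (n - (k+1)) z y else 0)
      ≤ (∑ z ∈ (reach G (k+1) x).filter (fun z => z ∈ A), nstep (rker p A) (k+1) x z) * M := by
    intro k _
    have hpush : ∀ n, (if k < n then
        ∑ z ∈ (reach G (k+1) x).filter (fun z => z ∈ A),
          nstep (rker p A) (k+1) x z * nstep p (n - (k+1)) z y else 0)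
        = ∑ z ∈ (reach G (k+1) x).filter (fun z => z ∈ A),
            nstep (rker p A) (k+1) x z * (if k < n then nstep p (n - (k+1)) z y else 0) := by
      intro n
      by_cases h : k < n
      · rw [if_pos h]; exact Finset.sum_congr rfl (fun z _ => by rw [if_pos h])
      · rw [if_neg h]
        rw [Finset.sum_congr rfl (fun z (_ : z ∈ (reach G (k+1) x).filter (fun z => z ∈ A)) => by
          rw [if_neg h, mul_zero])]
        rw [Finset.sum_const_zero]
    rw [Finset.sum_congr rfl (fun n _ => hpush n), Finset.sum_comm, Finset.sum_mul]
    apply Finset.sum_le_sum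
    intro z hz
    rw [← Finset.mul_sum]
    have hzA : z ∈ A := (Finset.mem_filter.1 hz).2
    have hb : ∑ n ∈ Finset.range N, (if k < n then nstep p (n - (k+1)) z y else 0) ≤ M := by
      rw [sum_range_shift (fun m => nstep p m z y) k N]
      refine le_trans (Summable.sum_le_tsum _ (fun m _ => nstep_nonneg hp0 m z y) (hsum z)) (hM z hzA)
    exact mul_le_mul_of_nonneg_left hb (nstep_nonneg (rker_nonneg hp0) (k+1) x z)
  refine le_trans (Finset.sum_le_sum hinner) ?_
  rw [← Finset.sum_mul]
  have hmass : ∑ k ∈ Finset.range N,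
      ∑ z ∈ (reach G (k+1) x).filter (fun z => z ∈ A), nstep (rker p A) (k+1) x z ≤ 1 := by
    have h := exit_mass hp0 hpadj hpsum hx N
    have hs0 : 0 ≤ ∑ w ∈ (reach G N x).filter (fun w => w ∉ A), nstep (rker p A) N x w :=
      Finset.sum_nonneg (fun w _ => nstep_nonneg (rker_nonneg hp0) N x w)
    linarith
  calc (∑ k ∈ Finset.range N,
        ∑ z ∈ (reach G (k+1) x).filter (fun z => z ∈ A), nstep (rker p A) (k+1) x z) * M
      ≤ 1 * M := mul_le_mul_of_nonneg_right hmass hM0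
    _ = M := one_mul M

lemma killed_nonneg (hp0 : ∀ a b, 0 ≤ p a b) (U : Set V) :
    ∀ a b, 0 ≤ killedKernel p U a b := by
  intro a b; unfold killedKernel; split
  · exact hp0 a b
  · exact le_refl 0

lemma killed_le (hp0 : ∀ a b, 0 ≤ p a b) (U : Set V) :
    ∀ a b, killedKernel p U a b ≤ p a b := by
  intro a b; unfold killedKernel; split
  · exact le_refl _
  · exact hp0 a b

lemma killed_adj (hpadj : ∀ a b, ¬ G.Adj a b → p a b = 0) (U : Set V) :
    ∀ a b, ¬ G.Adj a b → killedKernel p U a b = 0 := by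
  intro a b h; unfold killedKernel; split
  · exact hpadj a b h
  · rfl

lemma nstep_killed_eq_rker (U : Set V) :
    ∀ (n : ℕ) {y : V}, y ∈ U → ∀ x : V,
      nstep (killedKernel p U) n x y = nstep (rker p Uᶜ) n x y := by
  intro n
  induction n with
  | zero => intro y _ x; rfl
  | succ n ih =>
      intro y hy x
      apply tsum_congr
      intro z
      by_cases hz : z ∈ U
      · rw [ih hz x]
        have h1 : killedKernel p U z y = p z y := if_pos ⟨hz, hy⟩
        have h2 : rker p Uᶜ z y = p z y := if_neg (fun h => h hz)
        rw [h1, h2]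
      · have h1 : killedKernel p U z y = 0 := if_neg (fun h => hz h.1)
        have h2 : rker p Uᶜ z y = 0 := if_pos hz
        rw [h1, h2, mul_zero, mul_zero]

lemma summable_nstep_of_le (htrans : ∀ x y, Summable (fun n => nstep p n x y))
    (hp0 : ∀ a b, 0 ≤ p a b) (hpadj : ∀ a b, ¬ G.Adj a b → p a b = 0)
    {q : V → V → ℝ} (hq0 : ∀ a b, 0 ≤ q a b) (hqle : ∀ a b, q a b ≤ p a b) (x y : V) :
    Summable (fun n => nstep q n x y) :=
  Summable.of_nonneg_of_le (fun n => nstep_nonneg hq0 n x y)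
    (fun n => nstep_mono hq0 hqle hpadj n x y) (htrans x y)

lemma tsum_nstep_ne_le (hp0 : ∀ a b, 0 ≤ p a b) (hpadj : ∀ a b, ¬ G.Adj a b → p a b = 0)
    (hpsum : ∀ a, ∑ b ∈ G.neighborFinset a, p a b ≤ 1)
    (htrans : ∀ x y, Summable (fun n => nstep p n x y)) {x y : V} (hxy : x ≠ y) :
    (∑' n, nstep p n x y) ≤ ∑' m, nstep p m y y := by
  classical
  have hx : x ∉ ({y} : Set V) := fun h => hxy h
  apply Summable.tsum_le_of_sum_le (htrans x y)
  intro s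
  obtain ⟨N, hN⟩ := s.exists_nat_subset_range
  refine le_trans (Finset.sum_le_sum_of_subset_of_nonneg hN
    (fun n _ _ => nstep_nonneg hp0 n x y)) ?_
  have hdec : ∀ n ∈ Finset.range N, nstep p n x y
      = ∑ k ∈ Finset.range n, ∑ z ∈ (reach G (k+1) x).filter (fun z => z ∈ ({y} : Set V)),
          nstep (rker p ({y} : Set V)) (k+1) x z * nstep p (n - (k+1)) z y := by
    intro n _
    rw [nstep_decomp hpadj n hx y, if_pos (Set.mem_singleton y), zero_add]
  rw [Finset.sum_congr rfl hdec]
  exact keyD hp0 hpadj hpsum hx y (fun z => htrans z y)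
    (tsum_nonneg (fun m => nstep_nonneg hp0 m y y))
    (fun z hz => by rw [Set.mem_singleton_iff.1 hz]) N

lemma tsum_killed_lb (hp0 : ∀ a b, 0 ≤ p a b) (hpadj : ∀ a b, ¬ G.Adj a b → p a b = 0)
    (hpsum : ∀ a, ∑ b ∈ G.neighborFinset a, p a b ≤ 1)
    (htrans : ∀ x y, Summable (fun n => nstep p n x y))
    (U : Set V) {x y : V} (hxU : x ∈ U) (hyU : y ∈ U) {M : ℝ} (hM0 : 0 ≤ M)
    (hM : ∀ z, z ∉ U → (∑' m, nstep p m z y) ≤ M) :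
    (∑' n, nstep p n x y) ≤ (∑' n, nstep (killedKernel p U) n x y) + M := by
  classical
  have hx : x ∉ (Uᶜ : Set V) := fun h => h hxU
  apply Summable.tsum_le_of_sum_le (htrans x y)
  intro s
  obtain ⟨N, hN⟩ := s.exists_nat_subset_range
  refine le_trans (Finset.sum_le_sum_of_subset_of_nonneg hN
    (fun n _ _ => nstep_nonneg hp0 n x y)) ?_
  have hdec : ∀ n ∈ Finset.range N, nstep p n x y
      = nstep (killedKernel p U) n x y
        + ∑ k ∈ Finset.range n, ∑ z ∈ (reach G (k+1) x).filter (fun z => z ∈ (Uᶜ : Set V)),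
            nstep (rker p (Uᶜ : Set V)) (k+1) x z * nstep p (n - (k+1)) z y := by
    intro n _
    rw [nstep_decomp hpadj n hx y, if_neg (fun h => h hyU), nstep_killed_eq_rker U n hyU x]
  rw [Finset.sum_congr rfl hdec, Finset.sum_add_distrib]
  apply add_le_add
  · exact Summable.sum_le_tsum _ (fun n _ => nstep_nonneg (killed_nonneg hp0 U) n x y)
      (summable_nstep_of_le htrans hp0 hpadj (killed_nonneg hp0 U) (killed_le hp0 U) x y)
  · exact keyD hp0 hpadj hpsum hx y (fun z => htrans z y) hM0 (fun z hz => hM z hz) N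

lemma nstep_walk_pos (hp0 : ∀ a b, 0 ≤ p a b) (hpadj : ∀ a b, ¬ G.Adj a b → p a b = 0)
    (hppos : ∀ a b, G.Adj a b → 0 < p a b) :
    ∀ {x y : V} (W : G.Walk x y), 0 < nstep p W.length x y := by
  intro x y W
  induction W with
  | nil => simp [nstep]
  | @cons u v t h W ih =>
      rw [SimpleGraph.Walk.length_cons, nstep_firststep hpadj]
      have hmem : v ∈ G.neighborFinset u := (SimpleGraph.mem_neighborFinset _ _ _).2 h
      calc (0:ℝ) < p u v * nstep p W.length v t := mul_pos (hppos u v h) ih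
        _ ≤ ∑ z ∈ G.neighborFinset u, p u z * nstep p W.length z t :=
            Finset.single_le_sum (f := fun z => p u z * nstep p W.length z t)
              (fun z _ => mul_nonneg (hp0 u z) (nstep_nonneg hp0 W.length z t)) hmem

end Aux

/-- two-sided bounds of order R^β on the expected exit time of balls,
E_x[T_{B(x,R)}] = Σ_{y∈B(x,R)} λ_y g_{B(x,R)}(x,y). -/
theorem expected_exit_time_bounds
    {V : Type*} (G : SimpleGraph V) [∀ v : V, Fintype (G.neighborSet v)] [Infinite V]
    (hconn : G.Connected)
    (w : V → V → ℝ) (lam : V → ℝ) (p : V → V → ℝ) (d : V → V → ℝ)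
    (hw_symm : ∀ x y, w x y = w y x)
    (hw_nonneg : ∀ x y, 0 ≤ w x y)
    (hw_adj : ∀ x y, 0 < w x y ↔ G.Adj x y)
    (hlam : ∀ x, lam x = ∑ y ∈ G.neighborFinset x, w x y)
    (hp : ∀ x y, p x y = w x y / lam x)
    (htrans : ∀ x y, Summable (fun n => nstep p n x y))
    (c₀ : ℝ) (hc₀ : 0 < c₀) (hp₀ : ∀ x y, G.Adj x y → c₀ ≤ p x y)
    (hd_symm : ∀ x y, d x y = d y x)
    (hd_self : ∀ x, d x x = 0)
    (hd_nonneg : ∀ x y, 0 ≤ d x y)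
    (hd_tri : ∀ x y z, d x z ≤ d x y + d y z)
    (hBfin : ∀ (x : V) (L : ℝ), {y | d x y ≤ L}.Finite)
    (α β : ℝ) (hα : 2 < α) (hβ₂ : 2 ≤ β) (hβα : β < α)
    (cV CV : ℝ) (hcV : 0 < cV)
    (hVol : ∀ (x : V) (L : ℝ), 1 ≤ L →
      cV * L ^ α ≤ ∑ y ∈ (hBfin x L).toFinset, lam y ∧
        ∑ y ∈ (hBfin x L).toFinset, lam y ≤ CV * L ^ α)
    (cg Cg : ℝ) (hcg : 0 < cg)
    (hGdiag : ∀ x : V, cg ≤ green p lam x x ∧ green p lam x x ≤ Cg)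
    (hGoff : ∀ x y : V, x ≠ y →
      cg * d x y ^ (-(α - β)) ≤ green p lam x y ∧
        green p lam x y ≤ Cg * d x y ^ (-(α - β))) :
    ∃ c C : ℝ, 0 < c ∧ 0 < C ∧ ∀ (x : V) (R : ℝ), 1 ≤ R →
      c * R ^ β ≤ ∑ y ∈ (hBfin x R).toFinset, lam y * killedGreen p lam {v | d x v ≤ R} x y ∧
      (∑ y ∈ (hBfin x R).toFinset, lam y * killedGreen p lam {v | d x v ≤ R} x y ≤
        ∑ y ∈ (hBfin x R).toFinset, lam y * green p lam x y) ∧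
      ∑ y ∈ (hBfin x R).toFinset, lam y * green p lam x y ≤ C * R ^ β := by
  
  classical
  -- basic facts
  have hnbr : ∀ x : V, ∃ z, G.Adj x z := by
    intro x
    obtain ⟨z, hz⟩ := exists_ne x
    obtain ⟨W⟩ := (hconn.preconnected x z)
    cases W with
    | nil => exact absurd rfl hz
    | cons h _ => exact ⟨_, h⟩
  have hlam_pos : ∀ x, 0 < lam x := by
    intro x
    obtain ⟨z, hz⟩ := hnbr x
    have hmem : z ∈ G.neighborFinset x := (SimpleGraph.mem_neighborFinset _ _ _).2 hz
    calc (0:ℝ) < w x z := (hw_adj x z).2 hz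
      _ ≤ ∑ y ∈ G.neighborFinset x, w x y :=
          Finset.single_le_sum (fun y _ => hw_nonneg x y) hmem
      _ = lam x := (hlam x).symm
  have hlam_nonneg : ∀ x, 0 ≤ lam x := fun x => (hlam_pos x).le
  have hp0 : ∀ a b, 0 ≤ p a b := fun a b => by
    rw [hp]; exact div_nonneg (hw_nonneg a b) (hlam_nonneg a)
  have hpadj : ∀ a b, ¬ G.Adj a b → p a b = 0 := by
    intro a b h
    have hw0 : w a b = 0 :=
      le_antisymm (not_lt.1 (fun hlt => h ((hw_adj a b).1 hlt))) (hw_nonneg a b)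
    rw [hp, hw0, zero_div]
  have hppos : ∀ a b, G.Adj a b → 0 < p a b := fun a b h => lt_of_lt_of_le hc₀ (hp₀ a b h)
  have hpsum : ∀ a, ∑ b ∈ G.neighborFinset a, p a b ≤ 1 := by
    intro a
    have : ∑ b ∈ G.neighborFinset a, p a b = lam a / lam a := by
      rw [Finset.sum_congr rfl (fun b _ => hp a b), ← Finset.sum_div, ← hlam]
    rw [this, div_self (hlam_pos a).ne']
  have hgreen_tsum : ∀ x y, lam y * green p lam x y = ∑' n, nstep p n x y := by
    intro x y
    unfold green
    rw [← mul_assoc, mul_one_div, div_self (hlam_pos y).ne', one_mul]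
  have hgreen_pos : ∀ x y, 0 < green p lam x y := by
    intro x y
    apply mul_pos (by rw [one_div]; exact inv_pos.2 (hlam_pos y))
    obtain ⟨W⟩ := hconn.preconnected x y
    calc (0:ℝ) < nstep p W.length x y := nstep_walk_pos hp0 hpadj hppos W
      _ ≤ ∑' n, nstep p n x y :=
          Summable.le_tsum (htrans x y) W.length (fun j _ => nstep_nonneg hp0 j x y)
  have hgreen_nonneg : ∀ x y, 0 ≤ green p lam x y := fun x y => (hgreen_pos x y).le
  have hν : 0 < α - β := sub_pos.2 hβα
  have hd_pos : ∀ x y : V, x ≠ y → 0 < d x y := by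
    intro x y hxy
    rcases lt_or_eq_of_le (hd_nonneg x y) with h | h
    · exact h
    · exfalso
      have h2 := (hGoff x y hxy).2
      rw [← h, Real.zero_rpow (neg_ne_zero.2 hν.ne'), mul_zero] at h2
      exact absurd h2 (not_le.2 (hgreen_pos x y))
  have hCg_pos : 0 < Cg := by
    obtain ⟨x⟩ := (inferInstance : Infinite V).nonempty
    exact lt_of_lt_of_le (hgreen_pos x x) (hGdiag x).2
  have hgreen_le_Cg : ∀ x y, green p lam x y ≤ Cg := by
    intro x y
    by_cases hxy : x = y
    · rw [hxy]; exact (hGdiag y).2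
    · have h1 : (∑' n, nstep p n x y) ≤ ∑' m, nstep p m y y :=
        tsum_nstep_ne_le hp0 hpadj hpsum htrans hxy
      have h2 : green p lam x y ≤ green p lam y y := by
        unfold green
        exact mul_le_mul_of_nonneg_left h1 (one_div_nonneg.2 (hlam_nonneg y))
      exact le_trans h2 (hGdiag y).2
  have hCV_pos : 0 < CV := by
    obtain ⟨x⟩ := (inferInstance : Infinite V).nonempty
    have h := hVol x 1 le_rfl
    have hball : 0 < ∑ y ∈ (hBfin x 1).toFinset, lam y := by
      calc (0:ℝ) < cV * 1 ^ α := by rw [Real.one_rpow, mul_one]; exact hcV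
        _ ≤ _ := h.1
    calc (0:ℝ) < ∑ y ∈ (hBfin x 1).toFinset, lam y := hball
      _ ≤ CV * 1 ^ α := h.2
      _ = CV := by rw [Real.one_rpow, mul_one]
  have hlam_le_CV : ∀ x, lam x ≤ CV := by
    intro x
    have hmem : x ∈ (hBfin x 1).toFinset := by
      rw [Set.Finite.mem_toFinset]
      show d x x ≤ 1
      rw [hd_self]; norm_num
    calc lam x ≤ ∑ y ∈ (hBfin x 1).toFinset, lam y :=
          Finset.single_le_sum (fun y _ => hlam_nonneg y) hmem
      _ ≤ CV * 1 ^ α := (hVol x 1 le_rfl).2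
      _ = CV := by rw [Real.one_rpow, mul_one]
  have hkG_nonneg : ∀ (U : Set V) x y, 0 ≤ killedGreen p lam U x y := by
    intro U x y
    unfold killedGreen
    exact mul_nonneg (one_div_nonneg.2 (hlam_nonneg y))
      (tsum_nonneg (fun n => nstep_nonneg (killed_nonneg hp0 U) n x y))
  have hmid : ∀ (U : Set V) x y, killedGreen p lam U x y ≤ green p lam x y := by
    intro U x y
    unfold killedGreen green
    apply mul_le_mul_of_nonneg_left _ (one_div_nonneg.2 (hlam_nonneg y))
    apply Summable.tsum_le_tsum (fun n => nstep_mono (killed_nonneg hp0 U) (killed_le hp0 U) hpadj n x y)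
      (summable_nstep_of_le htrans hp0 hpadj (killed_nonneg hp0 U) (killed_le hp0 U) x y)
      (htrans x y)
  have hβpos : (0:ℝ) < β := lt_of_lt_of_le two_pos hβ₂
  have h2nn : (0:ℝ) ≤ 2 := by norm_num
  have hupper : ∀ (x : V) (R : ℝ), 1 ≤ R →
      ∑ y ∈ (hBfin x R).toFinset, lam y * green p lam x y
        ≤ (Cg * CV * (1 + 2 ^ α * 4 ^ β)) * R ^ β := by
    intro x R hR
    have hRpos : (0:ℝ) < R := lt_of_lt_of_le one_pos hR
    obtain ⟨N, hN1, hN2⟩ : ∃ N : ℕ, R ≤ 2 ^ N ∧ (2:ℝ) ^ N ≤ 2 * R := by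
      have hex : ∃ n : ℕ, R ≤ (2:ℝ) ^ n := by
        obtain ⟨n, hn⟩ := exists_nat_gt R
        have h2 : (n:ℝ) < (2:ℝ) ^ n := by exact_mod_cast Nat.lt_two_pow_self (n := n)
        exact ⟨n, le_trans hn.le h2.le⟩
      refine ⟨Nat.find hex, Nat.find_spec hex, ?_⟩
      rcases Nat.eq_zero_or_pos (Nat.find hex) with h0 | hpos
      · rw [h0, pow_zero]; linarith
      · obtain ⟨m, hm⟩ : ∃ m, Nat.find hex = m + 1 := ⟨Nat.find hex - 1, by omega⟩
        have hmin : ¬ (R ≤ (2:ℝ) ^ m) := Nat.find_min hex (by omega)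
        rw [hm, pow_succ]
        push_neg at hmin
        linarith
    have hmem_s : ∀ y, y ∈ (hBfin x R).toFinset ↔ d x y ≤ R :=
      fun y => Set.Finite.mem_toFinset _
    have hterm_nonneg : ∀ y, 0 ≤ lam y * green p lam x y :=
      fun y => mul_nonneg (hlam_nonneg y) (hgreen_nonneg x y)
    rw [← Finset.sum_filter_add_sum_filter_not ((hBfin x R).toFinset) (fun y => d x y < 1)
      (fun y => lam y * green p lam x y)]
    have hpart1 : ∑ y ∈ (hBfin x R).toFinset.filter (fun y => d x y < 1),
        lam y * green p lam x y ≤ Cg * CV := by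
      have h1 : ∑ y ∈ (hBfin x R).toFinset.filter (fun y => d x y < 1),
          lam y * green p lam x y
          ≤ ∑ y ∈ (hBfin x R).toFinset.filter (fun y => d x y < 1), lam y * Cg :=
        Finset.sum_le_sum (fun y _ =>
          mul_le_mul_of_nonneg_left (hgreen_le_Cg x y) (hlam_nonneg y))
      have h2 : ∑ y ∈ (hBfin x R).toFinset.filter (fun y => d x y < 1), lam y ≤ CV := by
        have hss : (hBfin x R).toFinset.filter (fun y => d x y < 1) ⊆ (hBfin x 1).toFinset := by
          intro y hy
          rw [Set.Finite.mem_toFinset]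
          exact le_of_lt (Finset.mem_filter.1 hy).2
        refine le_trans (Finset.sum_le_sum_of_subset_of_nonneg hss
          (fun y _ _ => hlam_nonneg y)) ?_
        calc ∑ y ∈ (hBfin x 1).toFinset, lam y ≤ CV * 1 ^ α := (hVol x 1 le_rfl).2
          _ = CV := by rw [Real.one_rpow, mul_one]
      calc ∑ y ∈ (hBfin x R).toFinset.filter (fun y => d x y < 1), lam y * green p lam x y
          ≤ ∑ y ∈ (hBfin x R).toFinset.filter (fun y => d x y < 1), lam y * Cg := h1
        _ = (∑ y ∈ (hBfin x R).toFinset.filter (fun y => d x y < 1), lam y) * Cg := by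
            rw [Finset.sum_mul]
        _ ≤ CV * Cg := mul_le_mul_of_nonneg_right h2 hCg_pos.le
        _ = Cg * CV := mul_comm _ _
    have hpart2 : ∑ y ∈ (hBfin x R).toFinset.filter (fun y => ¬ d x y < 1),
        lam y * green p lam x y ≤ Cg * CV * 2 ^ α * (4 ^ β * R ^ β) := by
      set t : ℕ → Finset V := fun j => ((hBfin x R).toFinset.filter (fun y => ¬ d x y < 1)).filter
        (fun y => (2:ℝ)^j ≤ d x y ∧ d x y < 2^(j+1)) with ht
      have hsub : (hBfin x R).toFinset.filter (fun y => ¬ d x y < 1)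
          ⊆ (Finset.range (N+1)).biUnion t := by
        intro y hy
        have hd1 : (1:ℝ) ≤ d x y := not_lt.1 (Finset.mem_filter.1 hy).2
        have hdR : d x y ≤ R := (hmem_s y).1 (Finset.mem_filter.1 hy).1
        have hjspec : (2:ℝ)^(Nat.findGreatest (fun i => (2:ℝ)^i ≤ d x y) N) ≤ d x y :=
          Nat.findGreatest_spec (P := fun i => (2:ℝ)^i ≤ d x y) (Nat.zero_le N)
            (by show (2:ℝ)^0 ≤ d x y; rw [pow_zero]; exact hd1)
        have hjle : Nat.findGreatest (fun i => (2:ℝ)^i ≤ d x y) N ≤ N :=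
          Nat.findGreatest_le N
        have hjlt : d x y < 2^((Nat.findGreatest (fun i => (2:ℝ)^i ≤ d x y) N)+1) := by
          by_cases hjN : (Nat.findGreatest (fun i => (2:ℝ)^i ≤ d x y) N) + 1 ≤ N
          · by_contra hcon
            exact Nat.findGreatest_is_greatest (Nat.lt_succ_self _) hjN (not_lt.1 hcon)
          · have hjN' : Nat.findGreatest (fun i => (2:ℝ)^i ≤ d x y) N = N := by omega
            rw [hjN', pow_succ]
            have h2N : (0:ℝ) < 2^N := pow_pos two_pos N
            calc d x y ≤ R := hdR
              _ ≤ 2^N := hN1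
              _ < 2^N * 2 := by linarith
        exact Finset.mem_biUnion.2 ⟨_, Finset.mem_range.2 (Nat.lt_succ_of_le hjle),
          Finset.mem_filter.2 ⟨hy, hjspec, hjlt⟩⟩
      have hdisj : Set.PairwiseDisjoint ↑(Finset.range (N+1)) t := by
        intro i _ j _ hij
        refine Finset.disjoint_left.2 (fun y hyi hyj => ?_)
        have h1 := (Finset.mem_filter.1 hyi).2
        have h2 := (Finset.mem_filter.1 hyj).2
        rcases Nat.lt_or_ge i j with h | h
        · have hpow : (2:ℝ)^(i+1) ≤ 2^j := pow_le_pow_right₀ one_le_two h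
          linarith [h1.2, h2.1]
        · have hij' : j < i := lt_of_le_of_ne h (Ne.symm hij)
          have hpow : (2:ℝ)^(j+1) ≤ 2^i := pow_le_pow_right₀ one_le_two hij'
          linarith [h2.2, h1.1]
      have hperj : ∀ j ∈ Finset.range (N+1), ∑ y ∈ t j, lam y * green p lam x y
          ≤ (Cg * CV * 2^α) * ((2:ℝ)^β)^j := by
        intro j _
        have hjpos : (0:ℝ) < 2^j := pow_pos two_pos j
        have hb : ∀ y ∈ t j, lam y * green p lam x y
            ≤ lam y * (Cg * ((2:ℝ)^j)^(-(α - β))) := by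
          intro y hy
          have hd1 : (1:ℝ) ≤ d x y := not_lt.1
            (Finset.mem_filter.1 (Finset.mem_filter.1 hy).1).2
          have hyx : x ≠ y := fun h => by
            rw [← h, hd_self] at hd1; linarith
          have hgb : green p lam x y ≤ Cg * d x y ^ (-(α - β)) := (hGoff x y hyx).2
          have hmono : d x y ^ (-(α - β)) ≤ ((2:ℝ)^j)^(-(α - β)) := by
            rw [Real.rpow_neg hjpos.le, Real.rpow_neg (by linarith : (0:ℝ) ≤ d x y)]
            apply inv_anti₀ (Real.rpow_pos_of_pos hjpos _)
            exact Real.rpow_le_rpow hjpos.le (Finset.mem_filter.1 hy).2.1 hν.le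
          refine mul_le_mul_of_nonneg_left ?_ (hlam_nonneg y)
          exact le_trans hgb (mul_le_mul_of_nonneg_left hmono hCg_pos.le)
        have hvolj : ∑ y ∈ t j, lam y ≤ CV * ((2:ℝ)^(j+1))^α := by
          have hss : t j ⊆ (hBfin x ((2:ℝ)^(j+1))).toFinset := by
            intro y hy
            rw [Set.Finite.mem_toFinset]
            exact le_of_lt (Finset.mem_filter.1 hy).2.2
          refine le_trans (Finset.sum_le_sum_of_subset_of_nonneg hss
            (fun y _ _ => hlam_nonneg y)) ?_
          refine (hVol x ((2:ℝ)^(j+1)) ?_).2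
          exact one_le_pow₀ one_le_two
        have hid : ((2:ℝ)^j)^(-(α - β)) * ((2:ℝ)^(j+1))^α = 2^α * ((2:ℝ)^β)^j := by
          rw [← Real.rpow_natCast (2:ℝ) j, ← Real.rpow_natCast (2:ℝ) (j+1),
            ← Real.rpow_mul h2nn, ← Real.rpow_mul h2nn,
            ← Real.rpow_natCast ((2:ℝ)^β) j, ← Real.rpow_mul h2nn,
            ← Real.rpow_add two_pos, ← Real.rpow_add two_pos]
          congr 1
          push_cast
          ring
        calc ∑ y ∈ t j, lam y * green p lam x y
            ≤ ∑ y ∈ t j, lam y * (Cg * ((2:ℝ)^j)^(-(α - β))) := Finset.sum_le_sum hb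
          _ = (Cg * ((2:ℝ)^j)^(-(α - β))) * ∑ y ∈ t j, lam y := by
              rw [← Finset.sum_mul, mul_comm]
          _ ≤ (Cg * ((2:ℝ)^j)^(-(α - β))) * (CV * ((2:ℝ)^(j+1))^α) := by
              refine mul_le_mul_of_nonneg_left hvolj ?_
              exact mul_nonneg hCg_pos.le (Real.rpow_nonneg hjpos.le _)
          _ = (Cg * CV * 2^α) * ((2:ℝ)^β)^j := by
              rw [show Cg * ((2:ℝ)^j)^(-(α - β)) * (CV * ((2:ℝ)^(j+1))^α)
                = (Cg * CV) * (((2:ℝ)^j)^(-(α - β)) * ((2:ℝ)^(j+1))^α) from by ring, hid]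
              ring
      have hq4 : (4:ℝ) ≤ (2:ℝ)^β := by
        have h1 : (2:ℝ)^(2:ℝ) ≤ (2:ℝ)^β := Real.rpow_le_rpow_of_exponent_le one_le_two hβ₂
        have h2 : (2:ℝ)^(2:ℝ) = 4 := by
          have := Real.rpow_natCast (2:ℝ) 2
          norm_num at this
          linarith [this]
        linarith
      have hgeom : ∑ j ∈ Finset.range (N+1), ((2:ℝ)^β)^j ≤ 4^β * R^β := by
        have hqgt1 : (1:ℝ) < (2:ℝ)^β := by linarith
        have hq1 : ((2:ℝ)^β) ≠ 1 := ne_of_gt hqgt1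
        rw [geom_sum_eq hq1]
        have hqpow1 : (1:ℝ) ≤ ((2:ℝ)^β)^(N+1) := one_le_pow₀ hqgt1.le
        have hstep1 : (((2:ℝ)^β)^(N+1) - 1)/((2:ℝ)^β - 1) ≤ ((2:ℝ)^β)^(N+1) - 1 :=
          div_le_self (by linarith) (by linarith)
        have hqpow : ((2:ℝ)^β)^(N+1) = ((2:ℝ)^(N+1) : ℝ)^β := by
          rw [← Real.rpow_natCast ((2:ℝ)^β) (N+1), ← Real.rpow_mul h2nn,
            mul_comm, Real.rpow_mul h2nn, Real.rpow_natCast]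
        have hbase : ((2:ℝ)^(N+1) : ℝ)^β ≤ (4*R)^β := by
          apply Real.rpow_le_rpow (pow_nonneg h2nn _) _ hβpos.le
          rw [pow_succ]
          linarith
        have hsplit : ((4:ℝ)*R)^β = 4^β * R^β :=
          Real.mul_rpow (by norm_num) hRpos.le
        calc (((2:ℝ)^β)^(N+1) - 1)/((2:ℝ)^β - 1) ≤ ((2:ℝ)^β)^(N+1) - 1 := hstep1
          _ ≤ ((2:ℝ)^β)^(N+1) := by linarith
          _ = ((2:ℝ)^(N+1) : ℝ)^β := hqpow
          _ ≤ (4*R)^β := hbase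
          _ = 4^β * R^β := hsplit
      calc ∑ y ∈ (hBfin x R).toFinset.filter (fun y => ¬ d x y < 1), lam y * green p lam x y
          ≤ ∑ y ∈ (Finset.range (N+1)).biUnion t, lam y * green p lam x y :=
            Finset.sum_le_sum_of_subset_of_nonneg hsub (fun y _ _ => hterm_nonneg y)
        _ = ∑ j ∈ Finset.range (N+1), ∑ y ∈ t j, lam y * green p lam x y :=
            Finset.sum_biUnion hdisj
        _ ≤ ∑ j ∈ Finset.range (N+1), (Cg * CV * 2^α) * ((2:ℝ)^β)^j :=
            Finset.sum_le_sum hperj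
        _ = (Cg * CV * 2^α) * ∑ j ∈ Finset.range (N+1), ((2:ℝ)^β)^j := by
            rw [Finset.mul_sum]
        _ ≤ (Cg * CV * 2^α) * (4^β * R^β) := by
            refine mul_le_mul_of_nonneg_left hgeom ?_
            exact mul_nonneg (mul_nonneg hCg_pos.le hCV_pos.le)
              (Real.rpow_nonneg h2nn _)
        _ = Cg * CV * 2^α * (4^β * R^β) := rfl
    have hR1 : (1:ℝ) ≤ R^β := by
      calc (1:ℝ) = R^(0:ℝ) := (Real.rpow_zero R).symm
        _ ≤ R^β := Real.rpow_le_rpow_of_exponent_le hR hβpos.le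
    have ha : (0:ℝ) < Cg * CV := mul_pos hCg_pos hCV_pos
    have hX : (0:ℝ) < (2:ℝ)^α := Real.rpow_pos_of_pos two_pos α
    have hY : (0:ℝ) < (4:ℝ)^β := Real.rpow_pos_of_pos (by norm_num) β
    nlinarith [hpart1, hpart2]
  -- lower bound setup
  have hνpow_pos : (0:ℝ) < (2:ℝ)^((α-β)+1) := Real.rpow_pos_of_pos two_pos _
  have htν : (0:ℝ) < (cg / (Cg * 2^((α-β)+1)))^(1/(α-β)) :=
    Real.rpow_pos_of_pos (div_pos hcg (mul_pos hCg_pos hνpow_pos)) _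
  set σ : ℝ := min (1/2) ((cg / (Cg * 2^((α-β)+1)))^(1/(α-β))) with hσdef
  have hσ_pos : 0 < σ := lt_min (by norm_num) htν
  have hσ_half : σ ≤ 1/2 := min_le_left _ _
  have hσν : σ^(α-β) ≤ cg / (Cg * 2^((α-β)+1)) := by
    have hbnn : (0:ℝ) ≤ cg / (Cg * 2^((α-β)+1)) :=
      (div_pos hcg (mul_pos hCg_pos hνpow_pos)).le
    have h1 : σ^(α-β) ≤ ((cg / (Cg * 2^((α-β)+1)))^(1/(α-β)))^(α-β) :=
      Real.rpow_le_rpow hσ_pos.le (min_le_right _ _) hν.le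
    rwa [← Real.rpow_mul hbnn, one_div_mul_cancel hν.ne', Real.rpow_one] at h1
  have hkey : ∀ (x : V) (R : ℝ), 1 ≤ R → ∀ y, d x y ≤ σ * R → y ≠ x →
      (Cg * 2^(α-β)) * R^(-(α-β)) ≤ killedGreen p lam {v | d x v ≤ R} x y := by
    intro x R hR y hdy hyx
    have hRpos : (0:ℝ) < R := by linarith
    have hxU : x ∈ {v | d x v ≤ R} := by show d x x ≤ R; rw [hd_self]; linarith
    have hyU : y ∈ {v | d x v ≤ R} := by
      show d x y ≤ R
      have hh : σ * R ≤ (1/2) * R := mul_le_mul_of_nonneg_right hσ_half hRpos.le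
      linarith
    have h1σ : (1:ℝ)/2 ≤ 1 - σ := by linarith
    have h1σpos : (0:ℝ) < 1 - σ := by linarith
    have hMnn : 0 ≤ lam y * (Cg * ((1 - σ) * R)^(-(α-β))) :=
      mul_nonneg (hlam_nonneg y) (mul_nonneg hCg_pos.le (Real.rpow_nonneg (by positivity) _))
    have hMz : ∀ z, z ∉ {v | d x v ≤ R} →
        (∑' m, nstep p m z y) ≤ lam y * (Cg * ((1 - σ) * R)^(-(α-β))) := by
      intro z hz
      have hdz : R < d x z := not_le.1 hz
      have htri := hd_tri x y z
      rw [hd_symm y z] at htri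
      have hdzy : (1 - σ) * R ≤ d z y := by nlinarith
      have hzy : z ≠ y := by
        intro h
        rw [h, hd_self] at hdzy
        nlinarith
      rw [← hgreen_tsum z y]
      apply mul_le_mul_of_nonneg_left _ (hlam_nonneg y)
      refine le_trans (hGoff z y hzy).2 ?_
      apply mul_le_mul_of_nonneg_left _ hCg_pos.le
      rw [Real.rpow_neg (hd_nonneg z y), Real.rpow_neg (mul_nonneg h1σpos.le hRpos.le)]
      apply inv_anti₀ (Real.rpow_pos_of_pos (mul_pos h1σpos hRpos) _)
      exact Real.rpow_le_rpow (mul_nonneg h1σpos.le hRpos.le) hdzy hν.le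
    have hdecomp := tsum_killed_lb hp0 hpadj hpsum htrans {v | d x v ≤ R} hxU hyU hMnn hMz
    have hgG : green p lam x y
        ≤ killedGreen p lam {v | d x v ≤ R} x y + Cg * ((1-σ)*R)^(-(α-β)) := by
      have h4 : lam y * killedGreen p lam {v | d x v ≤ R} x y
          = ∑' n, nstep (killedKernel p {v | d x v ≤ R}) n x y := by
        unfold killedGreen
        rw [← mul_assoc, mul_one_div, div_self (hlam_pos y).ne', one_mul]
      have h3 : lam y * green p lam x y
          ≤ lam y * (killedGreen p lam {v | d x v ≤ R} x y + Cg * ((1-σ)*R)^(-(α-β))) := by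
        rw [hgreen_tsum, mul_add, h4]
        exact hdecomp
      exact (mul_le_mul_iff_right₀ (hlam_pos y)).1 h3
    have hdxy_pos : 0 < d x y := hd_pos x y (Ne.symm hyx)
    have hglb : (Cg * 2^((α-β)+1)) * R^(-(α-β)) ≤ green p lam x y := by
      refine le_trans ?_ (hGoff x y (Ne.symm hyx)).1
      have h5 : (σ*R)^(-(α-β)) ≤ (d x y)^(-(α-β)) := by
        rw [Real.rpow_neg (mul_nonneg hσ_pos.le hRpos.le), Real.rpow_neg hdxy_pos.le]
        apply inv_anti₀ (Real.rpow_pos_of_pos hdxy_pos _)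
        exact Real.rpow_le_rpow hdxy_pos.le hdy hν.le
      have hσνpos : 0 < σ^(α-β) := Real.rpow_pos_of_pos hσ_pos _
      have h8 : Cg * 2^((α-β)+1) * σ^(α-β) ≤ cg := by
        have h9 := mul_le_mul_of_nonneg_left hσν (mul_pos hCg_pos hνpow_pos).le
        have h10 : Cg * 2^((α-β)+1) * (cg / (Cg * 2^((α-β)+1))) = cg := by
          field_simp
        nlinarith [h9, h10]
      have h7 : Cg * 2^((α-β)+1) ≤ cg * σ^(-(α-β)) := by
        rw [Real.rpow_neg hσ_pos.le]
        calc Cg * 2^((α-β)+1) = (Cg * 2^((α-β)+1) * σ^(α-β)) * (σ^(α-β))⁻¹ := by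
              field_simp
          _ ≤ cg * (σ^(α-β))⁻¹ :=
              mul_le_mul_of_nonneg_right h8 (inv_nonneg.2 hσνpos.le)
      have h6 : (Cg * 2^((α-β)+1)) * R^(-(α-β)) ≤ cg * (σ*R)^(-(α-β)) := by
        rw [Real.mul_rpow hσ_pos.le hRpos.le]
        calc (Cg * 2^((α-β)+1)) * R^(-(α-β)) ≤ (cg * σ^(-(α-β))) * R^(-(α-β)) :=
              mul_le_mul_of_nonneg_right h7 (Real.rpow_nonneg hRpos.le _)
          _ = cg * (σ^(-(α-β)) * R^(-(α-β))) := by ring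
      exact le_trans h6 (mul_le_mul_of_nonneg_left h5 hcg.le)
    have hcorr : Cg * ((1-σ)*R)^(-(α-β)) ≤ Cg * 2^(α-β) * R^(-(α-β)) := by
      rw [Real.mul_rpow h1σpos.le hRpos.le]
      have h10 : ((1:ℝ)/2)^(-(α-β)) = 2^(α-β) := by
        rw [one_div, Real.inv_rpow h2nn, Real.rpow_neg h2nn, inv_inv]
      have h9 : ((1:ℝ)-σ)^(-(α-β)) ≤ 2^(α-β) := by
        rw [← h10, Real.rpow_neg h1σpos.le, Real.rpow_neg (by norm_num : (0:ℝ) ≤ 1/2)]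
        apply inv_anti₀ (Real.rpow_pos_of_pos (by norm_num : (0:ℝ) < 1/2) _)
        exact Real.rpow_le_rpow (by norm_num) h1σ hν.le
      have h11 := mul_le_mul_of_nonneg_right h9 (Real.rpow_nonneg hRpos.le (-(α-β)))
      nlinarith [hCg_pos]
    have h2ν : (Cg * 2^((α-β)+1)) * R^(-(α-β)) = 2 * ((Cg * 2^(α-β)) * R^(-(α-β))) := by
      rw [Real.rpow_add two_pos, Real.rpow_one]
      ring
    linarith
  -- constants for the lower bound
  have hσα_pos : (0:ℝ) < σ^α := Real.rpow_pos_of_pos hσ_pos _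
  set Rth : ℝ := max (1/σ) ((2*CV/(cV*σ^α))^(1/α)) with hRthdef
  set R1 : ℝ := max 1 Rth with hR1def
  have hR1pos : (0:ℝ) < R1 := lt_of_lt_of_le one_pos (le_max_left _ _)
  set c1 : ℝ := (Cg * 2^(α-β)) * (cV * σ^α / 2) with hc1def
  have hc1pos : 0 < c1 :=
    mul_pos (mul_pos hCg_pos (Real.rpow_pos_of_pos two_pos _)) (by positivity)
  set clo : ℝ := min c1 (R1^(-β)) with hclodef
  have hclo_pos : 0 < clo := lt_min hc1pos (Real.rpow_pos_of_pos hR1pos _)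
  have hlower : ∀ (x : V) (R : ℝ), 1 ≤ R →
      clo * R^β ≤ ∑ y ∈ (hBfin x R).toFinset, lam y * killedGreen p lam {v | d x v ≤ R} x y := by
    intro x R hR
    have hRpos : (0:ℝ) < R := by linarith
    have hS1 : (1:ℝ) ≤ ∑ y ∈ (hBfin x R).toFinset,
        lam y * killedGreen p lam {v | d x v ≤ R} x y := by
      have hxmem : x ∈ (hBfin x R).toFinset := by
        rw [Set.Finite.mem_toFinset]; show d x x ≤ R; rw [hd_self]; linarith
      have h4 : lam x * killedGreen p lam {v | d x v ≤ R} x x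
          = ∑' n, nstep (killedKernel p {v | d x v ≤ R}) n x x := by
        unfold killedGreen
        rw [← mul_assoc, mul_one_div, div_self (hlam_pos x).ne', one_mul]
      have hterm : (1:ℝ) ≤ lam x * killedGreen p lam {v | d x v ≤ R} x x := by
        rw [h4]
        have h0 : nstep (killedKernel p {v | d x v ≤ R}) 0 x x = 1 := by simp [nstep]
        calc (1:ℝ) = nstep (killedKernel p {v | d x v ≤ R}) 0 x x := h0.symm
          _ ≤ ∑' n, nstep (killedKernel p {v | d x v ≤ R}) n x x :=
              Summable.le_tsum (summable_nstep_of_le htrans hp0 hpadj (killed_nonneg hp0 _)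
                (killed_le hp0 _) x x) 0
                (fun j _ => nstep_nonneg (killed_nonneg hp0 _) j x x)
      calc (1:ℝ) ≤ lam x * killedGreen p lam {v | d x v ≤ R} x x := hterm
        _ ≤ _ := Finset.single_le_sum
            (fun y _ => mul_nonneg (hlam_nonneg y) (hkG_nonneg _ x y)) hxmem
    rcases le_total R R1 with hc | hc
    · have hRb : R^β ≤ R1^β := Real.rpow_le_rpow hRpos.le hc hβpos.le
      have hmul : clo * R^β ≤ R1^(-β) * R1^β := by
        apply mul_le_mul (min_le_right _ _) hRb (Real.rpow_nonneg hRpos.le β)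
          (Real.rpow_nonneg hR1pos.le _)
      have hone : R1^(-β) * R1^β = 1 := by
        rw [← Real.rpow_add hR1pos]; norm_num
      linarith
    · have hRth' : Rth ≤ R := le_trans (le_max_right 1 Rth) hc
      have hσR1 : 1 ≤ σ * R := by
        have h1 : 1/σ ≤ R := le_trans (le_max_left _ _) hRth'
        rw [div_le_iff₀ hσ_pos] at h1
        nlinarith
      have hRα : 2*CV/(cV*σ^α) ≤ R^α := by
        have hbase : (2*CV/(cV*σ^α))^(1/α) ≤ R := le_trans (le_max_right _ _) hRth'
        have hbnn : (0:ℝ) ≤ 2*CV/(cV*σ^α) := by positivity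
        have hmono := Real.rpow_le_rpow (Real.rpow_nonneg hbnn _) hbase
          (by linarith : (0:ℝ) ≤ α)
        rwa [← Real.rpow_mul hbnn, one_div_mul_cancel (by linarith : α ≠ 0),
          Real.rpow_one] at hmono
      have hvol := (hVol x (σ*R) hσR1).1
      have hσRα : (σ*R)^α = σ^α * R^α := Real.mul_rpow hσ_pos.le hRpos.le
      have hxmem' : x ∈ (hBfin x (σ*R)).toFinset := by
        rw [Set.Finite.mem_toFinset]; show d x x ≤ σ*R; rw [hd_self]; linarith
      have hkey2 := Finset.sum_erase_add ((hBfin x (σ*R)).toFinset) lam hxmem'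
      have hlx := hlam_le_CV x
      have hsum_inner : cV * σ^α / 2 * R^α ≤ ∑ y ∈ ((hBfin x (σ*R)).toFinset).erase x, lam y := by
        have hhalf : cV * σ^α / 2 * R^α ≥ CV := by
          have h12 := mul_le_mul_of_nonneg_left hRα (le_of_lt (by positivity : (0:ℝ) < cV*σ^α/2))
          have h13 : cV * σ^α / 2 * (2*CV/(cV*σ^α)) = CV := by field_simp
          linarith [h12, h13.symm.le, h13.le]
        rw [hσRα] at hvol
        nlinarith [hvol, hkey2]
      have hpt : ∀ y ∈ ((hBfin x (σ*R)).toFinset).erase x,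
          lam y * ((Cg * 2^(α-β)) * R^(-(α-β)))
            ≤ lam y * killedGreen p lam {v | d x v ≤ R} x y := by
        intro y hy
        have hyne : y ≠ x := (Finset.mem_erase.1 hy).1
        have hdy : d x y ≤ σ*R := by
          have h := (Finset.mem_erase.1 hy).2
          rwa [Set.Finite.mem_toFinset] at h
        exact mul_le_mul_of_nonneg_left (hkey x R hR y hdy hyne) (hlam_nonneg y)
      have hsub2 : ((hBfin x (σ*R)).toFinset).erase x ⊆ (hBfin x R).toFinset := by
        intro y hy
        rw [Set.Finite.mem_toFinset]
        have hdy : d x y ≤ σ*R := by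
          have h := (Finset.mem_erase.1 hy).2
          rwa [Set.Finite.mem_toFinset] at h
        have hh : σ * R ≤ (1/2) * R := mul_le_mul_of_nonneg_right hσ_half hRpos.le
        show d x y ≤ R
        linarith
      have hA_pos : (0:ℝ) < (Cg * 2^(α-β)) * R^(-(α-β)) :=
        mul_pos (mul_pos hCg_pos (Real.rpow_pos_of_pos two_pos _))
          (Real.rpow_pos_of_pos hRpos _)
      have hRpow : R^(-(α-β)) * R^α = R^β := by
        rw [← Real.rpow_add hRpos]; congr 1; ring
      calc clo * R^β ≤ c1 * R^β :=
            mul_le_mul_of_nonneg_right (min_le_left _ _) (Real.rpow_nonneg hRpos.le _)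
        _ = ((Cg * 2^(α-β)) * R^(-(α-β))) * (cV * σ^α / 2 * R^α) := by
            rw [hc1def, ← hRpow]; ring
        _ ≤ ((Cg * 2^(α-β)) * R^(-(α-β))) * ∑ y ∈ ((hBfin x (σ*R)).toFinset).erase x, lam y :=
            mul_le_mul_of_nonneg_left hsum_inner hA_pos.le
        _ = ∑ y ∈ ((hBfin x (σ*R)).toFinset).erase x, lam y * ((Cg * 2^(α-β)) * R^(-(α-β))) := by
            rw [Finset.mul_sum]
            exact Finset.sum_congr rfl (fun y _ => mul_comm _ _)
        _ ≤ ∑ y ∈ ((hBfin x (σ*R)).toFinset).erase x,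
              lam y * killedGreen p lam {v | d x v ≤ R} x y := Finset.sum_le_sum hpt
        _ ≤ ∑ y ∈ (hBfin x R).toFinset, lam y * killedGreen p lam {v | d x v ≤ R} x y :=
            Finset.sum_le_sum_of_subset_of_nonneg hsub2
              (fun y _ _ => mul_nonneg (hlam_nonneg y) (hkG_nonneg _ x y))
  refine ⟨clo, Cg * CV * (1 + 2 ^ α * 4 ^ β), hclo_pos, ?_, ?_⟩
  · have hX : (0:ℝ) < (2:ℝ)^α := Real.rpow_pos_of_pos two_pos α
    have hY : (0:ℝ) < (4:ℝ)^β := Real.rpow_pos_of_pos (by norm_num) β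
    have hZ : (0:ℝ) < 1 + 2^α*4^β := by nlinarith [mul_pos hX hY]
    exact mul_pos (mul_pos hCg_pos hCV_pos) hZ
  intro x R hR
  refine ⟨hlower x R hR, ?_, hupper x R hR⟩
  exact Finset.sum_le_sum (fun y _ =>
    mul_le_mul_of_nonneg_left (hmid _ x y) (hlam_nonneg y))
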